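/- Let λ > 0, γ > 0, k > 0 with k² ≥ 2λ, and set λ₁ = k − √(k² − 2λ), λ₂ = k + √(k² − 2λ). If ξ₁ and ξ₂ are independent random variables with ξ₁ ~ Gamma(γ, λ₁) and ξ₂ ~ Gamma(γ, λ₂), then the Laplace transform of ξ = ξ₁ + ξ₂ equals f̂(ks + s²/2), where f̂(s) = (λ/(λ+s))^γ is the Laplace transform of the Gamma(γ, λ) distribution. -/

import Mathlib

open MeasureTheory ProbabilityTheory Real

open Set in
lemma gamma_laplace {a r s : ℝ} (ha : 0 < a) (hr : 0 < r) (hs : 0 ≤ s) :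
    ∫ x, Real.exp (-s * x) ∂(gammaMeasure a r) = (r / (r + s)) ^ a := by
  have hrs : 0 < r + s := by linarith
  have hc : 0 ≤ (r / (r + s)) ^ a := by positivity
  have hkey : ∀ x : ℝ, ENNReal.ofReal (Real.exp (-s * x)) * gammaPDF a r x
      = ENNReal.ofReal ((r / (r + s)) ^ a) * gammaPDF a (r + s) x := by
    intro x
    rcases le_or_gt 0 x with hx | hx
    · rw [gammaPDF_of_nonneg hx, gammaPDF_of_nonneg hx,
        ← ENNReal.ofReal_mul (by positivity), ← ENNReal.ofReal_mul hc]
      congr 1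
      rw [div_rpow hr.le hrs.le]
      field_simp
      rw [show Real.exp (-(x * (r + s))) = Real.exp (-(s * x)) * Real.exp (-(x * r)) by
        rw [← Real.exp_add]; ring_nf]
      ring
    · rw [gammaPDF_of_neg hx, gammaPDF_of_neg hx, mul_zero, mul_zero]
  rw [integral_eq_lintegral_of_nonneg_ae (ae_of_all _ fun x => (Real.exp_pos _).le)
      (Measurable.aestronglyMeasurable (by fun_prop))]
  rw [gammaMeasure, lintegral_withDensity_eq_lintegral_mul _
      (show Measurable (gammaPDF a r) from (measurable_gammaPDFReal a r).ennreal_ofReal) (by fun_prop)]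
  simp only [Pi.mul_apply]
  calc (∫⁻ x, gammaPDF a r x * ENNReal.ofReal (Real.exp (-s * x))).toReal
      = (∫⁻ x, ENNReal.ofReal ((r / (r + s)) ^ a) * gammaPDF a (r + s) x).toReal := by
        congr 1; refine lintegral_congr fun x => ?_; rw [mul_comm]; exact hkey x
    _ = (r / (r + s)) ^ a := by
        rw [lintegral_const_mul _ (show Measurable (gammaPDF a (r+s)) from (measurable_gammaPDFReal a (r+s)).ennreal_ofReal),
          lintegral_gammaPDF_eq_one ha hrs, mul_one, ENNReal.toReal_ofReal hc]

/-- Theorem 2: if `ξ₁ ~ Gamma(γ, λ₁)` and `ξ₂ ~ Gamma(γ, λ₂)` are independent, with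
`λ₁ = k − √(k² − 2λ)`, `λ₂ = k + √(k² − 2λ)` (where `k² ≥ 2λ`), then the Laplace
transform of `ξ = ξ₁ + ξ₂` equals `f̂(ks + s²/2)`, where `f̂(s) = (λ/(λ+s))^γ` is
the Laplace transform of `Gamma(γ, λ)`. -/
theorem gamma_sum_solves_shiryaev
    {Ω : Type*} [MeasureSpace Ω] [IsProbabilityMeasure (volume : Measure Ω)]
    (lam gam k : ℝ) (hlam : 0 < lam) (hgam : 0 < gam) (hk : 0 < k)
    (hk2 : 2 * lam ≤ k ^ 2)
    (lam₁ lam₂ : ℝ)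
    (hlam₁ : lam₁ = k - Real.sqrt (k ^ 2 - 2 * lam))
    (hlam₂ : lam₂ = k + Real.sqrt (k ^ 2 - 2 * lam))
    (ξ₁ ξ₂ : Ω → ℝ) (h₁m : Measurable ξ₁) (h₂m : Measurable ξ₂)
    (hindep : IndepFun ξ₁ ξ₂)
    (h₁ : Measure.map ξ₁ volume = gammaMeasure gam lam₁)
    (h₂ : Measure.map ξ₂ volume = gammaMeasure gam lam₂) :
    ∀ s : ℝ, 0 ≤ s →
      (∫ ω, Real.exp (-s * (ξ₁ ω + ξ₂ ω)))
        = (lam / (lam + (k * s + s ^ 2 / 2))) ^ gam := by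
  intro s hs
  have hsq : Real.sqrt (k ^ 2 - 2 * lam) ^ 2 = k ^ 2 - 2 * lam :=
    Real.sq_sqrt (by linarith)
  have hsqlt : Real.sqrt (k ^ 2 - 2 * lam) < k := by
    nlinarith [Real.sqrt_nonneg (k ^ 2 - 2 * lam)]
  have hl1 : 0 < lam₁ := by rw [hlam₁]; linarith
  have hl2 : 0 < lam₂ := by rw [hlam₂]; positivity
  have hfm : Measurable fun x : ℝ => Real.exp (-s * x) := by fun_prop
  have hsplit : (∫ ω, Real.exp (-s * (ξ₁ ω + ξ₂ ω)))
      = ∫ ω, (fun ω => Real.exp (-s * ξ₁ ω)) ω * (fun ω => Real.exp (-s * ξ₂ ω)) ω := by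
    congr 1; funext ω; rw [← Real.exp_add]; ring_nf
  have hind2 : IndepFun (fun ω => Real.exp (-s * ξ₁ ω)) (fun ω => Real.exp (-s * ξ₂ ω)) :=
    hindep.comp hfm hfm
  have hprod := hind2.integral_mul_eq_mul_integral
      (hfm.comp h₁m).aestronglyMeasurable (hfm.comp h₂m).aestronglyMeasurable
  rw [hsplit]
  erw [hprod]
  have e₁ : (∫ ω, Real.exp (-s * ξ₁ ω)) = (lam₁ / (lam₁ + s)) ^ gam := by
    rw [← gamma_laplace hgam hl1 hs, ← h₁,
      integral_map h₁m.aemeasurable hfm.aestronglyMeasurable]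
  have e₂ : (∫ ω, Real.exp (-s * ξ₂ ω)) = (lam₂ / (lam₂ + s)) ^ gam := by
    rw [← gamma_laplace hgam hl2 hs, ← h₂,
      integral_map h₂m.aemeasurable hfm.aestronglyMeasurable]
  rw [e₁, e₂, ← Real.mul_rpow (by positivity) (by positivity)]
  congr 1
  have h1s : 0 < lam₁ + s := by linarith
  have h2s : 0 < lam₂ + s := by linarith
  have hden : 0 < lam + (k * s + s ^ 2 / 2) := by positivity
  have hmul : lam₁ * lam₂ = 2 * lam := by rw [hlam₁, hlam₂]; nlinarith
  have hsum : lam₁ + lam₂ = 2 * k := by rw [hlam₁, hlam₂]; ring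
  field_simp
  linear_combination (lam * 2 + k * s * 2 + s ^ 2 - 2 * lam) * hmul - 2 * lam * s * hsum
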